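/- Let X_• be a left n-exact sequence in C and F := Cok(Hom_C(−, d_1^X)). Then X_• is an n-exact sequence (i.e., also a right n-exact sequence) if and only if Ext^i_{mod C}(F, Hom_C(−, Y)) = 0 for all 0 ≤ i ≤ n and all Y ∈ C. -/

import Mathlib

/-!
STATEMENT 9: let X_• be a left n-exact sequence in C and F := Cok(Hom_C(−, d 0)).
Then X_• is an n-exact sequence (i.e. also right n-exact) if and only if
Ext^i_{mod C}(F, Hom_C(−,Y)) = 0 for all 0 ≤ i ≤ n and all Y ∈ C.
Ext^0(F, N) = Hom(F, N), and for i ≥ 1 the vanishing of Ext^i(F, N) is expressed,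
via any projective (representable) resolution of F in mod C, by exactness of the
induced Hom-cocomplex at the i-th spot.
-/

open CategoryTheory CategoryTheory.Limits Opposite

universe v u

set_option linter.unusedSectionVars false

namespace Stmt9Aux

variable {C : Type u} [Category.{v} C] [Preadditive C]

/-- the element of `G (op A)` corresponding to `α : yA ⟶ G`. -/
def yel {A : C} {G : Cᵒᵖ ⥤ AddCommGrpCat.{v}} (α : preadditiveYoneda.obj A ⟶ G) :
    G.obj (op A) := α.app (op A) (𝟙 A)

lemma yoneda_ext {A : C} {G : Cᵒᵖ ⥤ AddCommGrpCat.{v}}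
    (α β : preadditiveYoneda.obj A ⟶ G) (h : yel α = yel β) : α = β := by
  ext c x
  have key : ∀ (γ : preadditiveYoneda.obj A ⟶ G),
      γ.app c x = G.map (Quiver.Hom.op (x : c.unop ⟶ A)) (yel γ) := by
    intro γ
    have h1 := ConcreteCategory.congr_hom
      (γ.naturality (Quiver.Hom.op (x : c.unop ⟶ A))) (𝟙 A)
    have h2 : (preadditiveYoneda.obj A).map (Quiver.Hom.op (x : c.unop ⟶ A)) (𝟙 A) = x := by
      show (x : c.unop ⟶ A) ≫ 𝟙 A = x
      exact Category.comp_id _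
    exact Eq.trans (congrArg (γ.app c) h2.symm) h1
  rw [key α, key β, h]

lemma yel_map {A B : C} (f : A ⟶ B) : yel (preadditiveYoneda.map f) = f := by
  show 𝟙 A ≫ f = f
  simp

lemma yel_comp {A : C} {G H : Cᵒᵖ ⥤ AddCommGrpCat.{v}} (α : preadditiveYoneda.obj A ⟶ G)
    (η : G ⟶ H) : yel (α ≫ η) = η.app (op A) (yel α) := rfl

lemma yel_map_comp {A B : C} {G : Cᵒᵖ ⥤ AddCommGrpCat.{v}} (f : A ⟶ B)
    (α : preadditiveYoneda.obj B ⟶ G) :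
    yel (preadditiveYoneda.map f ≫ α) = α.app (op A) f := by
  show α.app (op A) ((preadditiveYoneda.map f).app (op A) (𝟙 A)) = α.app (op A) f
  congr 1
  show 𝟙 A ≫ f = f
  simp

lemma yel_zero {A : C} {G : Cᵒᵖ ⥤ AddCommGrpCat.{v}} : yel (0 : preadditiveYoneda.obj A ⟶ G) = 0 := rfl

lemma py_map_zero {A B : C} : preadditiveYoneda.map (0 : A ⟶ B) = 0 := by
  apply yoneda_ext; rw [yel_map, yel_zero]; rfl

lemma py_full {A B : C} (α : preadditiveYoneda.obj A ⟶ preadditiveYoneda.obj B) :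
    α = preadditiveYoneda.map (yel α) := by
  apply yoneda_ext
  exact (yel_map (C := C) (yel α : A ⟶ B)).symm

lemma py_faithful {A B : C} {f g : A ⟶ B}
    (h : preadditiveYoneda.map f = preadditiveYoneda.map g) : f = g := by
  rw [← yel_map (C := C) f, ← yel_map (C := C) g, h]

end Stmt9Aux

namespace Stmt9Aux

variable {C : Type u} [Category.{v} C] [Preadditive C]

lemma comp_zero_pointwise {M N P : Cᵒᵖ ⥤ AddCommGrpCat.{v}} (u : M ⟶ N) (w : N ⟶ P)
    (h : ∀ c, Function.Exact ⇑(u.app c) ⇑(w.app c)) : u ≫ w = 0 := by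
  ext c x
  simpa using (h c).apply_apply_eq_zero x

lemma lift_surj {A B : C} {G : Cᵒᵖ ⥤ AddCommGrpCat.{v}} (w : preadditiveYoneda.obj B ⟶ G)
    (hw : ∀ c, Function.Surjective ⇑(w.app c)) (α : preadditiveYoneda.obj A ⟶ G) :
    ∃ b : preadditiveYoneda.obj A ⟶ preadditiveYoneda.obj B, b ≫ w = α := by
  obtain ⟨z, hz⟩ := hw (op A) (yel α)
  exact ⟨preadditiveYoneda.map (z : A ⟶ B),
    yoneda_ext _ _ ((yel_map_comp (C := C) _ _).trans hz)⟩

lemma lift_exact {A B B' : C} {G : Cᵒᵖ ⥤ AddCommGrpCat.{v}}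
    (u : preadditiveYoneda.obj B' ⟶ preadditiveYoneda.obj B)
    (w : preadditiveYoneda.obj B ⟶ G)
    (hexact : ∀ c, Function.Exact ⇑(u.app c) ⇑(w.app c))
    (α : preadditiveYoneda.obj A ⟶ preadditiveYoneda.obj B) (hα : α ≫ w = 0) :
    ∃ b : preadditiveYoneda.obj A ⟶ preadditiveYoneda.obj B', b ≫ u = α := by
  have h0 : w.app (op A) (yel α) = 0 := by
    have h1 := congrArg yel hα
    rw [yel_comp, yel_zero] at h1
    exact h1
  obtain ⟨z, hz⟩ := (hexact (op A) (yel α)).mp h0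
  exact ⟨preadditiveYoneda.map (z : A ⟶ B'),
    yoneda_ext _ _ ((yel_map_comp (C := C) _ _).trans hz)⟩

lemma cok_app_surjective {M N : Cᵒᵖ ⥤ AddCommGrpCat.{v}} (φ : M ⟶ N) (c : Cᵒᵖ) :
    Function.Surjective ⇑((cokernel.π φ).app c) := by
  have : Epi ((cokernel.π φ).app c) := inferInstance
  exact (AddCommGrpCat.epi_iff_surjective _).mp this

lemma cok_app_exact {M N : Cᵒᵖ ⥤ AddCommGrpCat.{v}} (φ : M ⟶ N) (c : Cᵒᵖ) :
    Function.Exact ⇑(φ.app c) ⇑((cokernel.π φ).app c) := by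
  have hS : (ShortComplex.mk φ (cokernel.π φ) (cokernel.condition φ)).Exact :=
    ShortComplex.exact_of_g_is_cokernel _ (cokernelIsCokernel φ)
  have hm := hS.map ((evaluation Cᵒᵖ AddCommGrpCat.{v}).obj c)
  rw [ShortComplex.ab_exact_iff_function_exact] at hm
  exact hm

end Stmt9Aux

namespace Stmt9Aux

variable {C : Type u} [Category.{v} C] [Preadditive C]

lemma comp_zero_of_exact_yoneda {A B D : C} {p : A ⟶ B} {q : B ⟶ D}
    (h : ∀ c : Cᵒᵖ, Function.Exact ⇑((preadditiveYoneda.map p).app c)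
      ⇑((preadditiveYoneda.map q).app c)) :
    p ≫ q = 0 := by
  have h1 := (h (op A)).apply_apply_eq_zero (𝟙 A)
  have h2 : (𝟙 A ≫ p) ≫ q = 0 := h1
  simpa using h2

lemma pyMap_app {A B : C} (φ : A ⟶ B) (c : Cᵒᵖ) (x : (preadditiveYoneda.obj A).obj c) :
    (preadditiveYoneda.map φ).app c x = (x : c.unop ⟶ A) ≫ φ := rfl


lemma forward_exact
    (n : ℕ) (X : ℕ → C) (d : ∀ i, X (i + 1) ⟶ X i)
    (hleft_exact : ∀ i, i < n → ∀ c : Cᵒᵖ, Function.Exact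
      ⇑((preadditiveYoneda.map (d (i + 1))).app c) ⇑((preadditiveYoneda.map (d i)).app c))
    (hex : ∀ (Y : C) i, i < n → Function.Exact
        (fun g : X i ⟶ Y => d i ≫ g) (fun g : X (i + 1) ⟶ Y => d (i + 1) ≫ g))
    (Y : C) (j : ℕ) (hj : j < n)
    (K : ℕ → C)
    (δ : ∀ m, preadditiveYoneda.obj (K (m + 1)) ⟶ preadditiveYoneda.obj (K m))
    (ε : preadditiveYoneda.obj (K 0) ⟶ cokernel (preadditiveYoneda.map (d 0)))
    (hεs : ∀ c, Function.Surjective ⇑(ε.app c))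
    (hεe : ∀ c, Function.Exact ⇑((δ 0).app c) ⇑(ε.app c))
    (hδe : ∀ m c, Function.Exact ⇑((δ (m + 1)).app c) ⇑((δ m).app c)) :
    Function.Exact
      (fun g : preadditiveYoneda.obj (K j) ⟶ preadditiveYoneda.obj Y => δ j ≫ g)
      (fun g : preadditiveYoneda.obj (K (j + 1)) ⟶ preadditiveYoneda.obj Y =>
        δ (j + 1) ≫ g) := by
  set π : preadditiveYoneda.obj (X 0) ⟶ cokernel (preadditiveYoneda.map (d 0)) :=
    cokernel.π (preadditiveYoneda.map (d 0)) with hπ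
  have hπs : ∀ c, Function.Surjective ⇑(π.app c) := cok_app_surjective _
  have hπe : ∀ c, Function.Exact ⇑((preadditiveYoneda.map (d 0)).app c) ⇑(π.app c) :=
    cok_app_exact _
  have hδδ : ∀ m, δ (m + 1) ≫ δ m = 0 := fun m => comp_zero_pointwise _ _ (hδe m)
  have hδε : δ 0 ≫ ε = 0 := comp_zero_pointwise _ _ hεe
  have hdd : ∀ i, i < n → d (i + 1) ≫ d i = 0 := by
    intro i hi
    have h1 := (hleft_exact i hi (op (X (i + 2)))).apply_apply_eq_zero (𝟙 (X (i + 2)))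
    have h2 : (𝟙 (X (i + 2)) ≫ d (i + 1)) ≫ d i = 0 := h1
    simpa using h2
  -- the comparison chain f : P → K
  have hfex : ∀ N : ℕ, ∃ f : ∀ m, (preadditiveYoneda.obj (X m) ⟶ preadditiveYoneda.obj (K m)),
      f 0 ≫ ε = π ∧ ∀ m, m < N → m < n + 1 →
        f (m + 1) ≫ δ m = preadditiveYoneda.map (d m) ≫ f m := by
    intro N
    induction N with
    | zero =>
        obtain ⟨f0, hf0⟩ := lift_surj ε hεs π
        exact ⟨fun m => Nat.rec f0 (fun _ _ => 0) m, hf0, fun m hm => by omega⟩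
    | succ N ih =>
        obtain ⟨f, hf0, hf⟩ := ih
        by_cases hN : N < n + 1
        · have hb : ∃ b, b ≫ δ N = preadditiveYoneda.map (d N) ≫ f N := by
            cases N with
            | zero =>
                refine lift_exact (δ 0) ε hεe _ ?_
                rw [Category.assoc, hf0, hπ]
                exact cokernel.condition _
            | succ M =>
                refine lift_exact (δ (M + 1)) (δ M) (hδe M) _ ?_
                rw [Category.assoc, hf M (by omega) (by omega), ← Category.assoc,
                  ← preadditiveYoneda.map_comp, hdd M (by omega), py_map_zero, zero_comp]
          obtain ⟨b, hb⟩ := hb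
          refine ⟨Function.update f (N + 1) b, ?_, ?_⟩
          · rwa [Function.update_of_ne (by omega)]
          · intro m hm _
            rcases Nat.lt_succ_iff_lt_or_eq.mp hm with hm' | hm'
            · rw [Function.update_of_ne (by omega), Function.update_of_ne (by omega)]
              exact hf m hm' (by omega)
            · subst hm'
              rw [Function.update_self, Function.update_of_ne (by omega)]
              exact hb
        · exact ⟨f, hf0, fun m hm hm' => hf m (by omega) hm'⟩
  obtain ⟨f, hf0, hf⟩ := hfex (n + 1)
  -- the comparison chain g : K → P
  have hgex : ∀ N : ℕ, ∃ g : ∀ m, (preadditiveYoneda.obj (K m) ⟶ preadditiveYoneda.obj (X m)),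
      g 0 ≫ π = ε ∧ ∀ m, m < N → m < n →
        g (m + 1) ≫ preadditiveYoneda.map (d m) = δ m ≫ g m := by
    intro N
    induction N with
    | zero =>
        obtain ⟨g0, hg0⟩ := lift_surj π hπs ε
        exact ⟨fun m => Nat.rec g0 (fun _ _ => 0) m, hg0, fun m hm => by omega⟩
    | succ N ih =>
        obtain ⟨g, hg0, hg⟩ := ih
        by_cases hN : N < n
        · have hb : ∃ b, b ≫ preadditiveYoneda.map (d N) = δ N ≫ g N := by
            cases N with
            | zero =>
                refine lift_exact (preadditiveYoneda.map (d 0)) π hπe _ ?_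
                rw [Category.assoc, hg0]
                exact hδε
            | succ M =>
                refine lift_exact (preadditiveYoneda.map (d (M + 1)))
                  (preadditiveYoneda.map (d M)) (hleft_exact M (by omega)) _ ?_
                rw [Category.assoc, hg M (by omega) (by omega), ← Category.assoc,
                  hδδ M, zero_comp]
          obtain ⟨b, hb⟩ := hb
          refine ⟨Function.update g (N + 1) b, ?_, ?_⟩
          · rwa [Function.update_of_ne (by omega)]
          · intro m hm _
            rcases Nat.lt_succ_iff_lt_or_eq.mp hm with hm' | hm'
            · rw [Function.update_of_ne (by omega), Function.update_of_ne (by omega)]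
              exact hg m hm' (by omega)
            · subst hm'
              rw [Function.update_self, Function.update_of_ne (by omega)]
              exact hb
        · exact ⟨g, hg0, fun m hm hm' => hg m (by omega) hm'⟩
  obtain ⟨g, hg0, hg⟩ := hgex n
  -- the homotopy s
  have hsex : ∀ N : ℕ, ∃ s : ∀ m, (preadditiveYoneda.obj (K m) ⟶ preadditiveYoneda.obj (K (m + 1))),
      s 0 ≫ δ 0 = 𝟙 _ - g 0 ≫ f 0 ∧ ∀ m, m < N → m < n →
        s (m + 1) ≫ δ (m + 1) = 𝟙 _ - g (m + 1) ≫ f (m + 1) - δ m ≫ s m := by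
    intro N
    induction N with
    | zero =>
        have hb : ∃ b, b ≫ δ 0 = 𝟙 (preadditiveYoneda.obj (K 0)) - g 0 ≫ f 0 := by
          refine lift_exact (δ 0) ε hεe _ ?_
          rw [Preadditive.sub_comp, Category.id_comp, Category.assoc, hf0, hg0, sub_self]
        obtain ⟨s0, hs0⟩ := hb
        exact ⟨fun m => Nat.rec s0 (fun _ _ => 0) m, hs0, fun m hm => by omega⟩
    | succ N ih =>
        obtain ⟨s, hs0, hs⟩ := ih
        by_cases hN : N < n
        · have hb : ∃ b, b ≫ δ (N + 1) =
              𝟙 (preadditiveYoneda.obj (K (N + 1))) - g (N + 1) ≫ f (N + 1) - δ N ≫ s N := by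
            refine lift_exact (δ (N + 1)) (δ N) (hδe N) _ ?_
            have e1 : f (N + 1) ≫ δ N = preadditiveYoneda.map (d N) ≫ f N :=
              hf N (by omega) (by omega)
            have e2 : g (N + 1) ≫ preadditiveYoneda.map (d N) = δ N ≫ g N :=
              hg N (by omega) hN
            rw [Preadditive.sub_comp, Preadditive.sub_comp, Category.id_comp,
              Category.assoc, e1, ← Category.assoc (g (N + 1)), e2, Category.assoc (δ N) (s N)]
            cases N with
            | zero =>
                rw [hs0, Preadditive.comp_sub, Category.comp_id, Category.assoc]
                abel
            | succ M =>
                rw [hs M (by omega) (by omega), Preadditive.comp_sub, Preadditive.comp_sub,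
                  Category.comp_id, ← Category.assoc (δ (M + 1)) (δ M),
                  hδδ M, zero_comp, sub_zero, Category.assoc]
                abel
          obtain ⟨b, hb⟩ := hb
          refine ⟨Function.update s (N + 1) b, ?_, ?_⟩
          · rwa [Function.update_of_ne (by omega)]
          · intro m hm _
            rcases Nat.lt_succ_iff_lt_or_eq.mp hm with hm' | hm'
            · rw [Function.update_of_ne (by omega), Function.update_of_ne (by omega)]
              exact hs m hm' (by omega)
            · subst hm'
              rw [Function.update_self, Function.update_of_ne (by omega)]
              exact hb
        · exact ⟨s, hs0, fun m hm hm' => hs m (by omega) hm'⟩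
  obtain ⟨s, hs0, hs⟩ := hsex n
  -- the main chase
  intro u
  constructor
  · intro hu
    -- produce v with δ j ≫ v = u
    have e1 : preadditiveYoneda.map (d (j + 1)) ≫ (f (j + 1) ≫ u) = 0 := by
      rw [← Category.assoc, ← hf (j + 1) (by omega) (by omega), Category.assoc]
      show f (j + 2) ≫ δ (j + 1) ≫ u = 0
      rw [show δ (j + 1) ≫ u = 0 from hu, comp_zero]
    set a : X (j + 1) ⟶ Y := yel (f (j + 1) ≫ u) with ha
    have hfa : f (j + 1) ≫ u = preadditiveYoneda.map a := py_full _
    have hda : d (j + 1) ≫ a = 0 := by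
      apply py_faithful
      rw [preadditiveYoneda.map_comp, ← hfa, e1, py_map_zero]
    obtain ⟨w, hw0⟩ := (hex Y j hj a).mp hda
    have hw : d j ≫ w = a := hw0
    refine ⟨g j ≫ preadditiveYoneda.map w + s j ≫ u, ?_⟩
    show δ j ≫ (g j ≫ preadditiveYoneda.map w + s j ≫ u) = u
    have e2 : δ j ≫ g j ≫ preadditiveYoneda.map w = g (j + 1) ≫ f (j + 1) ≫ u := by
      rw [← Category.assoc, ← hg j hj hj, Category.assoc, ← preadditiveYoneda.map_comp]
      show g (j + 1) ≫ preadditiveYoneda.map (d j ≫ w) = _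
      rw [hw, hfa]
    have e3 : δ j ≫ s j ≫ u = u - g (j + 1) ≫ f (j + 1) ≫ u := by
      have h4 : δ j ≫ s j = 𝟙 _ - g (j + 1) ≫ f (j + 1) - s (j + 1) ≫ δ (j + 1) := by
        rw [hs j hj hj]; abel
      rw [← Category.assoc, h4, Preadditive.sub_comp, Preadditive.sub_comp,
        Category.id_comp, Category.assoc, Category.assoc,
        show δ (j + 1) ≫ u = 0 from hu, comp_zero, sub_zero]
    rw [Preadditive.comp_add, e2, e3]
    abel
  · rintro ⟨v, hv⟩
    show δ (j + 1) ≫ u = 0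
    rw [← hv]
    show δ (j + 1) ≫ δ j ≫ v = 0
    rw [← Category.assoc, hδδ j, zero_comp]

end Stmt9Aux

namespace Stmt9Aux

open ZeroObject

variable {C : Type u} [Category.{v} C] [Preadditive C]

lemma backward_exact [HasZeroObject C]
    (n : ℕ) (X : ℕ → C) (d : ∀ i, X (i + 1) ⟶ X i)
    (hleft_exact : ∀ i, i < n → ∀ c : Cᵒᵖ, Function.Exact
      ⇑((preadditiveYoneda.map (d (i + 1))).app c) ⇑((preadditiveYoneda.map (d i)).app c))
    (hleft_mono : ∀ c : Cᵒᵖ, Function.Injective ⇑((preadditiveYoneda.map (d n)).app c))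
    (Y : C) (j : ℕ) (hj : j < n)
    (hvan : ∀ (K : ℕ → C)
      (δ : ∀ m, preadditiveYoneda.obj (K (m + 1)) ⟶ preadditiveYoneda.obj (K m))
      (ε : preadditiveYoneda.obj (K 0) ⟶ cokernel (preadditiveYoneda.map (d 0))),
      (∀ c : Cᵒᵖ, Function.Surjective ⇑(ε.app c)) →
      (∀ c : Cᵒᵖ, Function.Exact ⇑((δ 0).app c) ⇑(ε.app c)) →
      (∀ m (c : Cᵒᵖ), Function.Exact ⇑((δ (m + 1)).app c) ⇑((δ m).app c)) →
      Function.Exact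
        (fun g : preadditiveYoneda.obj (K j) ⟶ preadditiveYoneda.obj Y => δ j ≫ g)
        (fun g : preadditiveYoneda.obj (K (j + 1)) ⟶ preadditiveYoneda.obj Y =>
          δ (j + 1) ≫ g)) :
    Function.Exact
      (fun g : X j ⟶ Y => d j ≫ g) (fun g : X (j + 1) ⟶ Y => d (j + 1) ≫ g) := by
  classical
  set K : ℕ → C := fun m => if m ≤ n + 1 then X m else 0 with hKdef
  have hK : ∀ m, m ≤ n + 1 → K m = X m := fun m h => if_pos h
  have hK' : ∀ m, ¬(m ≤ n + 1) → K m = (0 : C) := fun m h => if_neg h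
  set δ : ∀ m, preadditiveYoneda.obj (K (m + 1)) ⟶ preadditiveYoneda.obj (K m) := fun m =>
    if h : m ≤ n then preadditiveYoneda.map
      (eqToHom (hK (m + 1) (by omega)) ≫ d m ≫ eqToHom (hK m (by omega)).symm)
    else 0 with hδdef
  have hδ : ∀ m (h : m ≤ n), δ m = preadditiveYoneda.map
      (eqToHom (hK (m + 1) (by omega)) ≫ d m ≫ eqToHom (hK m (by omega)).symm) :=
    fun m h => dif_pos h
  have hδ' : ∀ m, ¬(m ≤ n) → δ m = 0 := fun m h => dif_neg h
  set ε : preadditiveYoneda.obj (K 0) ⟶ cokernel (preadditiveYoneda.map (d 0)) :=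
    preadditiveYoneda.map (eqToHom (hK 0 (by omega))) ≫
      cokernel.π (preadditiveYoneda.map (d 0)) with hεdef
  have hπs := cok_app_surjective (preadditiveYoneda.map (d 0))
  have hπe := cok_app_exact (preadditiveYoneda.map (d 0))
  -- surjectivity of ε
  have hεs : ∀ c : Cᵒᵖ, Function.Surjective ⇑(ε.app c) := by
    intro c y
    obtain ⟨(t : c.unop ⟶ X 0), ht⟩ := hπs c y
    refine ⟨((t : c.unop ⟶ X 0) ≫ eqToHom (hK 0 (by omega)).symm :
      (c.unop ⟶ K 0)), ?_⟩
    show (cokernel.π (preadditiveYoneda.map (d 0))).app c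
      (((t ≫ eqToHom (hK 0 (by omega)).symm) : c.unop ⟶ K 0) ≫ eqToHom (hK 0 (by omega))) = y
    rw [Category.assoc, eqToHom_trans, eqToHom_refl, Category.comp_id]
    exact ht
  -- exactness at spot 0
  have hεe : ∀ c : Cᵒᵖ, Function.Exact ⇑((δ 0).app c) ⇑(ε.app c) := by
    intro c (x : c.unop ⟶ K 0)
    rw [hδ 0 (by omega)]
    constructor
    · intro hx
      have hx' : (cokernel.π (preadditiveYoneda.map (d 0))).app c
          ((x : c.unop ⟶ K 0) ≫ eqToHom (hK 0 (by omega))) = 0 := hx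
      obtain ⟨(z : c.unop ⟶ X 1), hz⟩ := (hπe c _).mp hx'
      have hz' : (z : c.unop ⟶ X 1) ≫ d 0 = (x : c.unop ⟶ K 0) ≫ eqToHom (hK 0 (by omega)) := hz
      refine ⟨((z : c.unop ⟶ X 1) ≫ eqToHom (hK 1 (by omega)).symm : c.unop ⟶ K 1), ?_⟩
      show ((z ≫ eqToHom (hK 1 (by omega)).symm) : c.unop ⟶ K 1) ≫
        (eqToHom (hK 1 (by omega)) ≫ d 0 ≫ eqToHom (hK 0 (by omega)).symm) = x
      rw [Category.assoc, ← Category.assoc (eqToHom (hK 1 (by omega)).symm), eqToHom_trans,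
        eqToHom_refl, Category.id_comp, ← Category.assoc, hz', Category.assoc, eqToHom_trans,
        eqToHom_refl, Category.comp_id]
    · rintro ⟨(z : c.unop ⟶ K 1), hz⟩
      rw [← hz]
      show (cokernel.π (preadditiveYoneda.map (d 0))).app c
        ((((z : c.unop ⟶ K 1) ≫ (eqToHom (hK 1 (by omega)) ≫ d 0 ≫
          eqToHom (hK 0 (by omega)).symm)) : c.unop ⟶ K 0) ≫ eqToHom (hK 0 (by omega))) = 0
      have e0 : (((z : c.unop ⟶ K 1) ≫ (eqToHom (hK 1 (by omega)) ≫ d 0 ≫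
          eqToHom (hK 0 (by omega)).symm)) : c.unop ⟶ K 0) ≫ eqToHom (hK 0 (by omega)) =
          ((z : c.unop ⟶ K 1) ≫ eqToHom (hK 1 (by omega))) ≫ d 0 := by
        simp
      rw [e0]
      exact (hπe c).apply_apply_eq_zero ((z : c.unop ⟶ K 1) ≫ eqToHom (hK 1 (by omega)))
  -- exactness at higher spots
  have hδe : ∀ m (c : Cᵒᵖ), Function.Exact ⇑((δ (m + 1)).app c) ⇑((δ m).app c) := by
    intro m c
    rcases lt_trichotomy m n with hm | hm | hm
    · -- m < n : use hleft_exact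
      intro (x : c.unop ⟶ K (m + 1))
      rw [hδ m (by omega), hδ (m + 1) (by omega)]
      constructor
      · intro hx
        have hx' : (x : c.unop ⟶ K (m + 1)) ≫ (eqToHom (hK (m + 1) (by omega)) ≫ d m ≫
            eqToHom (hK m (by omega)).symm) = 0 := hx
        have hx1 : ((x : c.unop ⟶ K (m + 1)) ≫ eqToHom (hK (m + 1) (by omega))) ≫ d m = 0 := by
          have := congrArg (fun t => t ≫ eqToHom (hK m (by omega))) hx'
          simpa using this
        obtain ⟨(z : c.unop ⟶ X (m + 2)), hz⟩ := (hleft_exact m hm c _).mp hx1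
        have hz' : (z : c.unop ⟶ X (m + 2)) ≫ d (m + 1) =
          (x : c.unop ⟶ K (m + 1)) ≫ eqToHom (hK (m + 1) (by omega)) := hz
        refine ⟨((z : c.unop ⟶ X (m + 2)) ≫ eqToHom (hK (m + 2) (by omega)).symm :
          c.unop ⟶ K (m + 2)), ?_⟩
        show ((z ≫ eqToHom (hK (m + 2) (by omega)).symm) : c.unop ⟶ K (m + 2)) ≫
          (eqToHom (hK (m + 2) (by omega)) ≫ d (m + 1) ≫ eqToHom (hK (m + 1) (by omega)).symm)
          = x
        rw [Category.assoc, ← Category.assoc (eqToHom (hK (m + 2) (by omega)).symm),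
          eqToHom_trans, eqToHom_refl, Category.id_comp, ← Category.assoc, hz',
          Category.assoc, eqToHom_trans, eqToHom_refl, Category.comp_id]
      · rintro ⟨(z : c.unop ⟶ K (m + 2)), hz⟩
        rw [← hz]
        show ((z : c.unop ⟶ K (m + 2)) ≫ (eqToHom (hK (m + 2) (by omega)) ≫ d (m + 1) ≫
          eqToHom (hK (m + 1) (by omega)).symm)) ≫
          (eqToHom (hK (m + 1) (by omega)) ≫ d m ≫ eqToHom (hK m (by omega)).symm) = 0
        have hdd : d (m + 1) ≫ d m = 0 :=
          comp_zero_of_exact_yoneda (hleft_exact m hm)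
        simp [reassoc_of% hdd]
    · -- m = n : use hleft_mono
      subst hm
      intro (x : c.unop ⟶ K (m + 1))
      rw [hδ m (by omega), hδ' (m + 1) (by omega)]
      constructor
      · intro hx
        have hx' : (x : c.unop ⟶ K (m + 1)) ≫ (eqToHom (hK (m + 1) (by omega)) ≫ d m ≫
            eqToHom (hK m (by omega)).symm) = 0 := hx
        have hx1 : ((x : c.unop ⟶ K (m + 1)) ≫ eqToHom (hK (m + 1) (by omega))) ≫ d m = 0 := by
          have := congrArg (fun t => t ≫ eqToHom (hK m (by omega))) hx'
          simpa using this
        have hx2 : (preadditiveYoneda.map (d m)).app c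
            ((x : c.unop ⟶ K (m + 1)) ≫ eqToHom (hK (m + 1) (by omega))) =
            (preadditiveYoneda.map (d m)).app c (0 : c.unop ⟶ X (m + 1)) := by
          show ((x : c.unop ⟶ K (m + 1)) ≫ eqToHom (hK (m + 1) (by omega))) ≫ d m =
            (0 : c.unop ⟶ X (m + 1)) ≫ d m
          rw [hx1, zero_comp]
        have hx3 := hleft_mono c hx2
        have hx4 : (x : c.unop ⟶ K (m + 1)) = 0 := by
          have := congrArg (fun t => t ≫ eqToHom (hK (m + 1) (by omega)).symm) hx3
          simpa using this
        exact ⟨0, by rw [map_zero]; exact hx4.symm⟩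
      · rintro ⟨z, hz⟩
        rw [← hz]
        have hz0 : ((0 : preadditiveYoneda.obj (K (m + 2)) ⟶
          preadditiveYoneda.obj (K (m + 1))).app c) z = 0 := rfl
        rw [hz0, map_zero]
    · -- m > n : middle object is zero
      intro x
      have hx0 : (x : c.unop ⟶ K (m + 1)) = 0 := by
        have hiso : K (m + 1) ≅ 0 := eqToIso (hK' (m + 1) (by omega))
        exact zero_of_target_iso_zero _ hiso
      have h1 : (δ m).app c x = 0 := by
        have hx0' : x = (0 : (preadditiveYoneda.obj (K (m + 1))).obj c) := hx0
        rw [hx0', map_zero]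
      rw [h1]
      simp only [eq_self_iff_true, true_iff]
      refine ⟨0, ?_⟩
      rw [map_zero]
      exact hx0.symm
  -- apply the vanishing hypothesis
  have hE := hvan K δ ε hεs hεe hδe
  intro u
  constructor
  · intro hu
    have hu' : d (j + 1) ≫ u = 0 := hu
    set U : preadditiveYoneda.obj (K (j + 1)) ⟶ preadditiveYoneda.obj Y :=
      preadditiveYoneda.map (eqToHom (hK (j + 1) (by omega)) ≫ u) with hUdef
    have hU0 : δ (j + 1) ≫ U = 0 := by
      rw [hδ (j + 1) (by omega), hUdef, ← preadditiveYoneda.map_comp]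
      have : (eqToHom (hK (j + 2) (by omega)) ≫ d (j + 1) ≫
          eqToHom (hK (j + 1) (by omega)).symm) ≫ (eqToHom (hK (j + 1) (by omega)) ≫ u) =
          eqToHom (hK (j + 2) (by omega)) ≫ (d (j + 1) ≫ u) := by
        simp
      rw [this, hu', comp_zero, py_map_zero]
    obtain ⟨V, hV⟩ := (hE U).mp hU0
    have hV' : δ j ≫ V = U := hV
    have hVfull : V = preadditiveYoneda.map (@id (K j ⟶ Y) (yel V)) := py_full V
    rw [hδ j (by omega), hVfull, ← preadditiveYoneda.map_comp, hUdef] at hV'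
    have hC := py_faithful hV'
    -- hC : (eqToHom ≫ d j ≫ eqToHom.symm) ≫ yel V = eqToHom ≫ u
    refine ⟨eqToHom (hK j (by omega)).symm ≫ (@id (K j ⟶ Y) (yel V)), ?_⟩
    show d j ≫ eqToHom (hK j (by omega)).symm ≫ (@id (K j ⟶ Y) (yel V)) = u
    have hC2 := congrArg (fun t => eqToHom (hK (j + 1) (by omega)).symm ≫ t) hC
    simpa using hC2
  · rintro ⟨v, hv⟩
    show d (j + 1) ≫ u = 0
    rw [← hv]
    show d (j + 1) ≫ d j ≫ v = 0
    rw [← Category.assoc, comp_zero_of_exact_yoneda (hleft_exact j hj), zero_comp]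

end Stmt9Aux


/-- Vanishing of `Ext^i_{mod C}(F, Hom_C(−, Y))`, computed via (all) projective
resolutions of `F` by representable functors. -/
def ExtVanish {C : Type u} [Category.{v} C] [Preadditive C]
    (F : Cᵒᵖ ⥤ AddCommGrpCat.{v}) (Y : C) : ℕ → Prop
  | 0 => ∀ φ : F ⟶ preadditiveYoneda.obj Y, φ = 0
  | (j + 1) =>
    ∀ (K : ℕ → C)
      (δ : ∀ m, preadditiveYoneda.obj (K (m + 1)) ⟶ preadditiveYoneda.obj (K m))
      (ε : preadditiveYoneda.obj (K 0) ⟶ F),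
      (∀ c : Cᵒᵖ, Function.Surjective ⇑(ε.app c)) →
      (∀ c : Cᵒᵖ, Function.Exact ⇑((δ 0).app c) ⇑(ε.app c)) →
      (∀ m (c : Cᵒᵖ), Function.Exact ⇑((δ (m + 1)).app c) ⇑((δ m).app c)) →
      Function.Exact
        (fun g : preadditiveYoneda.obj (K j) ⟶ preadditiveYoneda.obj Y => δ j ≫ g)
        (fun g : preadditiveYoneda.obj (K (j + 1)) ⟶ preadditiveYoneda.obj Y =>
          δ (j + 1) ≫ g)

theorem stmt9 {C : Type u} [Category.{v} C] [Preadditive C]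
    [HasZeroObject C] [HasBinaryBiproducts C] [IsIdempotentComplete C]
    (n : ℕ) (hn : 1 ≤ n) (X : ℕ → C) (d : ∀ i, X (i + 1) ⟶ X i)
    -- X_• is a left n-exact sequence:
    (hleft_exact : ∀ i, i < n → ∀ c : Cᵒᵖ, Function.Exact
      ⇑((preadditiveYoneda.map (d (i + 1))).app c)
      ⇑((preadditiveYoneda.map (d i)).app c))
    (hleft_mono : ∀ c : Cᵒᵖ, Function.Injective
      ⇑((preadditiveYoneda.map (d n)).app c)) :
    -- X_• is a right n-exact sequence:
    ((∀ Y : C, Function.Injective (fun g : X 0 ⟶ Y => d 0 ≫ g)) ∧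
     (∀ (Y : C) i, i < n → Function.Exact
        (fun g : X i ⟶ Y => d i ≫ g) (fun g : X (i + 1) ⟶ Y => d (i + 1) ≫ g)))
    ↔
    (∀ (Y : C) (i : ℕ), i ≤ n →
      ExtVanish (cokernel (preadditiveYoneda.map (d 0))) Y i) := by
  constructor
  · rintro ⟨hinj, hex⟩ Y i hi
    cases i with
    | zero =>
        show ∀ φ : cokernel (preadditiveYoneda.map (d 0)) ⟶ preadditiveYoneda.obj Y, φ = 0
        intro φ
        set π := cokernel.π (preadditiveYoneda.map (d 0)) with hπ
        have hfull : π ≫ φ = preadditiveYoneda.map (@id (X 0 ⟶ Y) (Stmt9Aux.yel (π ≫ φ))) :=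
          Stmt9Aux.py_full _
        have h0 : d 0 ≫ @id (X 0 ⟶ Y) (Stmt9Aux.yel (π ≫ φ)) = 0 := by
          apply Stmt9Aux.py_faithful
          rw [Functor.map_comp, ← hfull, ← Category.assoc, hπ, cokernel.condition,
            zero_comp, Stmt9Aux.py_map_zero]
        have ha : @id (X 0 ⟶ Y) (Stmt9Aux.yel (π ≫ φ)) = 0 := by
          apply hinj Y
          show d 0 ≫ @id (X 0 ⟶ Y) (Stmt9Aux.yel (π ≫ φ)) = d 0 ≫ 0
          rw [h0, comp_zero]
        have hz : π ≫ φ = 0 := by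
          rw [hfull, ha, Stmt9Aux.py_map_zero]
        exact (cancel_epi π).mp (by rw [hz, comp_zero])
    | succ j =>
        intro K δ ε h1 h2 h3
        exact Stmt9Aux.forward_exact n X d hleft_exact hex Y j (by omega) K δ ε h1 h2 h3
  · intro hvan
    constructor
    · intro Y a b hab
      have hab' : d 0 ≫ a = d 0 ≫ b := hab
      have h : d 0 ≫ (a - b) = 0 := by rw [Preadditive.comp_sub, hab', sub_self]
      have h2 : preadditiveYoneda.map (d 0) ≫ preadditiveYoneda.map (a - b) = 0 := by
        rw [← Functor.map_comp, h, Stmt9Aux.py_map_zero]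
      have hφ := hvan Y 0 (by omega)
        (cokernel.desc (preadditiveYoneda.map (d 0)) (preadditiveYoneda.map (a - b)) h2)
      have h3 : preadditiveYoneda.map (a - b) = 0 := by
        rw [← cokernel.π_desc (preadditiveYoneda.map (d 0))
          (preadditiveYoneda.map (a - b)) h2, hφ, comp_zero]
      have h4 : a - b = 0 := by
        apply Stmt9Aux.py_faithful
        rw [h3, Stmt9Aux.py_map_zero]
      exact sub_eq_zero.mp h4
    · intro Y j hj
      exact Stmt9Aux.backward_exact n X d hleft_exact hleft_mono Y j hj
        (fun K δ ε h1 h2 h3 => hvan Y (j + 1) (by omega) K δ ε h1 h2 h3)
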